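/- Let M : {-1,+1}^m → ℝ^m satisfy (ε,0)-differential privacy with respect to flipping any single input coordinate. Let S be uniform on {-1,+1}^m and T = M(S). Then for every v ∈ ℝ and every t in the support of T, the conditional probability P[∑_{i=1}^m max{0, T_i·S_i} ≥ v | T = t] is at most P[∑_{i=1}^m Š_i·|t_i| ≥ v], where Š ∈ {0,1}^m has independent Bernoulli(e^ε/(e^ε+1)) coordinates. -/

import Mathlib

open MeasureTheory ProbabilityTheory Real

/-- The ±1 sign associated to a boolean. -/
def sgn (b : Bool) : ℝ := if b then 1 else -1

/-- Two sign vectors are adjacent if they differ in at most one coordinate. -/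
def Adjacent {m : ℕ} (s s' : Fin m → Bool) : Prop := ∃ j, ∀ i, i ≠ j → s i = s' i

/-- `(ε,0)`-differential privacy with respect to flipping one input coordinate. -/
def PureDP {m : ℕ} (M : (Fin m → Bool) → Measure (Fin m → ℝ)) (ε : ℝ) : Prop :=
  ∀ s s', Adjacent s s' → ∀ A : Set (Fin m → ℝ), MeasurableSet A →
    M s A ≤ ENNReal.ofReal (exp ε) * M s' A

/-- Probability that independent Bernoulli coordinates come out as the pattern `sh`,
where each coordinate is `true` with probability `q`. -/
def bernVecPr {m : ℕ} (q : ℝ) (sh : Fin m → Bool) : ℝ :=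
  ∏ i, if sh i then q else 1 - q


open Finset
open scoped ENNReal

lemma bernVecPr_nonneg {m : ℕ} {q : ℝ} (h0 : 0 ≤ q) (h1 : q ≤ 1) (sh : Fin m → Bool) :
    0 ≤ bernVecPr q sh :=
  Finset.prod_nonneg (fun i _ => by by_cases hi : sh i <;> simp [hi, h0, h1, sub_nonneg])

lemma bernVecPr_cons {n : ℕ} (q : ℝ) (b : Bool) (sh : Fin n → Bool) :
    bernVecPr q (Fin.cons b sh) = (if b then q else 1 - q) * bernVecPr q sh := by
  simp [bernVecPr, Fin.prod_univ_succ]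

lemma sum_split {n : ℕ} (f : (Fin (n+1) → Bool) → ℝ) :
    ∑ sh, f sh = (∑ sh : Fin n → Bool, f (Fin.cons true sh))
      + ∑ sh : Fin n → Bool, f (Fin.cons false sh) := by
  rw [← (Fin.consEquiv (fun _ => Bool)).sum_comp, Fintype.sum_prod_type, Fintype.sum_bool]
  simp [Fin.consEquiv]

/-- Key combinatorial lemma. -/
lemma key_comb (a : ℝ) (ha : 1 ≤ a) :
    ∀ (n : ℕ) (p : (Fin n → Bool) → ℝ), (∀ sh, 0 ≤ p sh) →
    (∀ sh (j : Fin n), p (Function.update sh j true) ≤ a * p (Function.update sh j false)) →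
    ∀ (E : Finset (Fin n → Bool)),
      (∀ sh sh', (∀ i, sh i = true → sh' i = true) → sh ∈ E → sh' ∈ E) →
    ∑ sh ∈ E, p sh ≤ (∑ sh, p sh) * ∑ sh ∈ E, bernVecPr (a / (a + 1)) sh := by
  have ha1 : (0:ℝ) < a + 1 := by linarith
  set q := a / (a + 1) with hqdef
  have hq0 : 0 ≤ q := by positivity
  have hq1 : q ≤ 1 := by rw [hqdef, div_le_one ha1]; linarith
  have hqa : q * (a + 1) = a := div_mul_cancel₀ a (ne_of_gt ha1)
  intro n
  induction n with
  | zero =>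
    intro p hp hflip E hE
    rcases Finset.eq_empty_or_nonempty E with h | h
    · subst h
      simp only [Finset.sum_empty, mul_zero]; exact le_refl 0
    · have hEu : E = Finset.univ := Finset.eq_univ_of_card _ (le_antisymm (Finset.card_le_univ E)
        (by simpa using Finset.card_pos.mpr h))
      subst hEu
      have hb : ∀ sh : Fin 0 → Bool, bernVecPr q sh = 1 := fun sh => by simp [bernVecPr]
      simp [hb]
  | succ n ih =>
    intro p hp hflip E hE
    set p1 : (Fin n → Bool) → ℝ := fun sh => p (Fin.cons true sh) with hp1
    set p0 : (Fin n → Bool) → ℝ := fun sh => p (Fin.cons false sh) with hp0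
    set E1 : Finset (Fin n → Bool) := Finset.univ.filter (fun sh => Fin.cons true sh ∈ E) with hE1d
    set E0 : Finset (Fin n → Bool) := Finset.univ.filter (fun sh => Fin.cons false sh ∈ E) with hE0d
    have split : ∀ f : (Fin (n+1) → Bool) → ℝ,
        ∑ sh ∈ E, f sh = (∑ sh ∈ E1, f (Fin.cons true sh)) + ∑ sh ∈ E0, f (Fin.cons false sh) := by
      intro f
      have h1 : ∑ sh ∈ E1, f (Fin.cons true sh)
          = ∑ sh : Fin n → Bool, if Fin.cons true sh ∈ E then f (Fin.cons true sh) else 0 := by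
        rw [hE1d, Finset.sum_filter]
      have h0 : ∑ sh ∈ E0, f (Fin.cons false sh)
          = ∑ sh : Fin n → Bool, if Fin.cons false sh ∈ E then f (Fin.cons false sh) else 0 := by
        rw [hE0d, Finset.sum_filter]
      rw [h1, h0, ← sum_split (fun sh => if sh ∈ E then f sh else 0)]
      simp [Finset.sum_ite_mem]
    -- flip properties for sections
    have hflip1 : ∀ sh (j : Fin n), p1 (Function.update sh j true) ≤ a * p1 (Function.update sh j false) := by
      intro sh j
      simp only [hp1, Fin.cons_update]
      exact hflip (Fin.cons true sh) j.succ
    have hflip0 : ∀ sh (j : Fin n), p0 (Function.update sh j true) ≤ a * p0 (Function.update sh j false) := by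
      intro sh j
      simp only [hp0, Fin.cons_update]
      exact hflip (Fin.cons false sh) j.succ
    have hE1c : ∀ sh sh', (∀ i, sh i = true → sh' i = true) → sh ∈ E1 → sh' ∈ E1 := by
      intro sh sh' hmono hm
      rw [hE1d, Finset.mem_filter] at *
      refine ⟨Finset.mem_univ _, hE _ _ ?_ hm.2⟩
      intro i; refine Fin.cases ?_ ?_ i <;> simp [Fin.cons]
      intro j hj; exact hmono j hj
    have hE0c : ∀ sh sh', (∀ i, sh i = true → sh' i = true) → sh ∈ E0 → sh' ∈ E0 := by
      intro sh sh' hmono hm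
      rw [hE0d, Finset.mem_filter] at *
      refine ⟨Finset.mem_univ _, hE _ _ ?_ hm.2⟩
      intro i; refine Fin.cases ?_ ?_ i <;> simp [Fin.cons]
      intro j hj; exact hmono j hj
    have hsub : E0 ⊆ E1 := by
      intro sh hm
      rw [hE0d, Finset.mem_filter] at hm
      rw [hE1d, Finset.mem_filter]
      refine ⟨Finset.mem_univ _, hE _ _ ?_ hm.2⟩
      intro i; refine Fin.cases ?_ ?_ i <;> simp [Fin.cons]
    -- induction hypotheses
    have ih1 := ih p1 (fun sh => hp _) hflip1 E1 hE1c
    have ih0 := ih p0 (fun sh => hp _) hflip0 E0 hE0c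
    -- notation
    set c1 := ∑ sh : Fin n → Bool, p1 sh with hc1
    set c0 := ∑ sh : Fin n → Bool, p0 sh with hc0
    set B1 := ∑ sh ∈ E1, bernVecPr q sh with hB1
    set B0 := ∑ sh ∈ E0, bernVecPr q sh with hB0
    have hc1nn : 0 ≤ c1 := Finset.sum_nonneg fun sh _ => hp _
    have hc0nn : 0 ≤ c0 := Finset.sum_nonneg fun sh _ => hp _
    have hB0nn : 0 ≤ B0 := Finset.sum_nonneg fun sh _ => bernVecPr_nonneg hq0 hq1 _
    have hBle : B0 ≤ B1 :=
      Finset.sum_le_sum_of_subset_of_nonneg hsub (fun sh _ _ => bernVecPr_nonneg hq0 hq1 _)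
    have hc1c0 : c1 ≤ a * c0 := by
      rw [hc1, hc0, Finset.mul_sum]
      refine Finset.sum_le_sum fun sh _ => ?_
      have := hflip (Fin.cons true sh) 0
      simpa [Fin.update_cons_zero] using this
    have hc1q : c1 ≤ q * (c1 + c0) := by nlinarith
    -- total sum splits
    have htot : ∑ sh, p sh = c1 + c0 := by
      rw [hc1, hc0, hp1, hp0]
      exact sum_split p
    -- bern sum splits
    have hbern : ∑ sh ∈ E, bernVecPr q sh = q * B1 + (1 - q) * B0 := by
      rw [split (bernVecPr q), hB1, hB0, Finset.mul_sum, Finset.mul_sum]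
      congr 1 <;> exact Finset.sum_congr rfl fun sh _ => by rw [bernVecPr_cons]; simp
    rw [split p, htot, hbern]
    calc (∑ sh ∈ E1, p (Fin.cons true sh)) + ∑ sh ∈ E0, p (Fin.cons false sh)
        ≤ c1 * B1 + c0 * B0 := add_le_add ih1 ih0
      _ ≤ (c1 + c0) * (q * B1 + (1 - q) * B0) := by nlinarith [mul_nonneg (sub_nonneg.mpr hc1q) (sub_nonneg.mpr hBle)]

private lemma aux_ae (m : ℕ) (ε : ℝ) (hε : 0 ≤ ε)
    (M : (Fin m → Bool) → Measure (Fin m → ℝ))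
    (hMprob : ∀ s, IsProbabilityMeasure (M s)) (hMmeas : Measurable M)
    (hDP : PureDP M ε)
    (ρ : Measure ((Fin m → ℝ) × (Fin m → Bool)))
    (hρ : ρ = ((PMF.uniformOfFintype (Fin m → Bool)).toMeasure).bind
        (fun s => (M s).map (fun t => (t, s))))
    [IsFiniteMeasure ρ] :
    ∀ᵐ t ∂ρ.fst, ∀ pr : (Fin m → Bool) × (Fin m → Bool), Adjacent pr.1 pr.2 →
      ρ.condKernel t {pr.1} ≤ ENNReal.ofReal (exp ε) * ρ.condKernel t {pr.2} := by
  classical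
  have hrect : ∀ (s : Fin m → Bool) (A : Set (Fin m → ℝ)), MeasurableSet A →
      ρ (A ×ˢ ({s} : Set (Fin m → Bool))) = (Fintype.card (Fin m → Bool) : ℝ≥0∞)⁻¹ * M s A := by
    intro s A hA
    rw [hρ, Measure.bind_apply (hA.prod (measurableSet_singleton s))
      (Measurable.of_discrete (f := fun s0 => (M s0).map (fun t => (t, s0)))).aemeasurable]
    rw [MeasureTheory.lintegral_fintype]
    have hmap : ∀ s0 : Fin m → Bool, ((M s0).map (fun t => (t, s0))) (A ×ˢ ({s} : Set _))
        = if s0 = s then M s A else 0 := by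
      intro s0
      rw [Measure.map_apply measurable_prodMk_right (hA.prod (measurableSet_singleton s))]
      by_cases h : s0 = s
      · subst h
        simp only [if_true]
        congr 1
        ext u; simp
      · have he : (fun u => (u, s0)) ⁻¹' (A ×ˢ ({s} : Set _)) = ∅ := by
          ext u
          simp only [Set.mem_preimage, Set.mem_prod, Set.mem_singleton_iff, Set.mem_empty_iff_false, iff_false, not_and]
          exact fun _ => h
        rw [he]; simp [h]
        
    simp only [hmap]
    have huni : ∀ s0 : Fin m → Bool,
        ((PMF.uniformOfFintype (Fin m → Bool)).toMeasure) {s0}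
          = (Fintype.card (Fin m → Bool) : ℝ≥0∞)⁻¹ := by
      intro s0
      rw [PMF.toMeasure_apply_singleton _ _ (measurableSet_singleton s0)]
      simp [PMF.uniformOfFintype_apply]
    simp only [huni, ite_mul, zero_mul]
    rw [Finset.sum_ite_eq' Finset.univ s (fun _ => M s A * (Fintype.card (Fin m → Bool) : ℝ≥0∞)⁻¹)]
    simp [mul_comm]
  have hpair : ∀ (s s' : Fin m → Bool), Adjacent s s' →
      ∀ᵐ t ∂ρ.fst, ρ.condKernel t {s} ≤ ENNReal.ofReal (exp ε) * ρ.condKernel t {s'} := by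
    intro s s' hadj
    refine ae_le_of_forall_setLIntegral_le_of_sigmaFinite
      (ρ.condKernel.measurable_coe (measurableSet_singleton s)) ?_
    intro A hA _
    rw [Measure.setLIntegral_condKernel_eq_measure_prod hA (measurableSet_singleton s),
      lintegral_const_mul _ (ρ.condKernel.measurable_coe (measurableSet_singleton s')),
      Measure.setLIntegral_condKernel_eq_measure_prod hA (measurableSet_singleton s'),
      hrect s A hA, hrect s' A hA]
    calc (Fintype.card (Fin m → Bool) : ℝ≥0∞)⁻¹ * M s A
        ≤ (Fintype.card (Fin m → Bool) : ℝ≥0∞)⁻¹ * (ENNReal.ofReal (exp ε) * M s' A) :=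
          mul_le_mul_right (hDP s s' hadj A hA) _
      _ = ENNReal.ofReal (exp ε) * ((Fintype.card (Fin m → Bool) : ℝ≥0∞)⁻¹ * M s' A) := by
          rw [mul_left_comm]
  rw [ae_all_iff]
  intro pr
  by_cases h : Adjacent pr.1 pr.2
  · filter_upwards [hpair pr.1 pr.2 h] with t ht _
    exact ht
  · exact ae_of_all _ (fun t h' => absurd h' h)

private lemma aux_pointwise (m : ℕ) (ε : ℝ) (hε : 0 ≤ ε) (v : ℝ)
    (κt : Measure (Fin m → Bool)) [IsProbabilityMeasure κt] (t : Fin m → ℝ)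
    (ht : ∀ pr : (Fin m → Bool) × (Fin m → Bool), Adjacent pr.1 pr.2 →
      κt {pr.1} ≤ ENNReal.ofReal (exp ε) * κt {pr.2}) :
    κt {s : Fin m → Bool | v ≤ ∑ i, max 0 (t i * sgn (s i))}
      ≤ ENNReal.ofReal (∑ sh : Fin m → Bool,
          bernVecPr (exp ε / (exp ε + 1)) sh *
            (if v ≤ ∑ i, (if sh i then |t i| else 0) then 1 else 0)) := by
  classical
  have ha : (1:ℝ) ≤ exp ε := by
    have := Real.exp_le_exp.mpr hε
    simpa using Real.one_le_exp hε
  -- real-valued pmf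
  set p : (Fin m → Bool) → ℝ := fun s => (κt {s}).toReal with hpdef
  have hpnn : ∀ s, 0 ≤ p s := fun s => ENNReal.toReal_nonneg
  have hratio : ∀ s s', Adjacent s s' → p s ≤ exp ε * p s' := by
    intro s s' hadj
    have h := ht (s, s') hadj
    have hfin : ENNReal.ofReal (exp ε) * κt {s'} ≠ ∞ :=
      ENNReal.mul_ne_top ENNReal.ofReal_ne_top (measure_ne_top _ _)
    have := ENNReal.toReal_mono hfin h
    rwa [ENNReal.toReal_mul, ENNReal.toReal_ofReal (exp_nonneg ε)] at this
  -- measure of finsets as sums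
  have hsum : ∀ S : Finset (Fin m → Bool), κt ↑S = ∑ s ∈ S, κt {s} := by
    intro S
    have hU : (↑S : Set (Fin m → Bool)) = ⋃ s ∈ S, {s} := by ext x; simp
    rw [hU, measure_biUnion_finset ?_ (fun s _ => measurableSet_singleton s)]
    intro i _ j _ hij
    simp [Set.disjoint_singleton, hij]
  -- the sign-flip involution
  set σ : (Fin m → Bool) → (Fin m → Bool) := fun sh i => if t i < 0 then !(sh i) else sh i with hσ
  have hσinv : ∀ sh, σ (σ sh) = sh := by
    intro sh; funext i; by_cases h : t i < 0 <;> simp [hσ, h]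
  have hterm : ∀ (sh : Fin m → Bool) (i : Fin m),
      max 0 (t i * sgn (σ sh i)) = if sh i then |t i| else 0 := by
    intro sh i
    rcases lt_trichotomy (t i) 0 with h | h | h
    · cases hsi : sh i
      · have hv : σ sh i = true := by simp [hσ, h, hsi]
        rw [hv]
        simp only [sgn, if_true, hsi, mul_one]
        simpa using max_eq_left h.le
      · have hv : σ sh i = false := by simp [hσ, h, hsi]
        rw [hv]
        simp only [sgn, if_false, hsi, mul_neg_one]
        rw [abs_of_neg h]
        simpa using max_eq_right (by linarith : (0:ℝ) ≤ -(t i))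
    · simp [hσ, h, sgn]
    · cases hsi : sh i
      · have hv : σ sh i = false := by simp [hσ, not_lt.mpr h.le, hsi]
        rw [hv]
        simp only [sgn, if_false, hsi, mul_neg_one]
        simpa using max_eq_left (by linarith : -(t i) ≤ (0:ℝ))
      · have hv : σ sh i = true := by simp [hσ, not_lt.mpr h.le, hsi]
        rw [hv]
        simp only [sgn, if_true, hsi, mul_one]
        rw [abs_of_pos h]
        simpa using max_eq_right h.le
  have hσupd : ∀ (sh : Fin m → Bool) (j : Fin m) (b : Bool),
      σ (Function.update sh j b) = Function.update (σ sh) j (if t j < 0 then !b else b) := by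
    intro sh j b
    funext i
    by_cases h : i = j
    · subst h; simp [hσ]
    · simp [hσ, Function.update_of_ne h]
  have hadj_upd : ∀ (x : Fin m → Bool) (j : Fin m) (b b' : Bool),
      Adjacent (Function.update x j b) (Function.update x j b') := by
    intro x j b b'
    exact ⟨j, fun i hi => by simp [Function.update_of_ne hi]⟩
  set p' : (Fin m → Bool) → ℝ := fun sh => p (σ sh) with hp'
  have hflip' : ∀ sh (j : Fin m),
      p' (Function.update sh j true) ≤ exp ε * p' (Function.update sh j false) := by
    intro sh j
    simp only [hp', hσupd]
    exact hratio _ _ (hadj_upd (σ sh) j _ _)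
  -- the upward-closed event
  set q : ℝ := exp ε / (exp ε + 1) with hq
  set E : Finset (Fin m → Bool) :=
    Finset.univ.filter (fun sh => v ≤ ∑ i, if sh i then |t i| else 0) with hE
  have hEclosed : ∀ sh sh', (∀ i, sh i = true → sh' i = true) → sh ∈ E → sh' ∈ E := by
    intro sh sh' hmono hm
    rw [hE, Finset.mem_filter] at *
    refine ⟨Finset.mem_univ _, le_trans hm.2 (Finset.sum_le_sum fun i _ => ?_)⟩
    by_cases h : sh i
    · simp [h, hmono i h]
    · by_cases h' : sh' i <;> simp [h, h', abs_nonneg]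
  have hkey := key_comb (exp ε) ha m p' (fun sh => hpnn (σ sh)) hflip' E hEclosed
  -- total mass one
  have htotal : ∑ s, p s = 1 := by
    have h1 : κt (Set.univ) = ∑ s, κt {s} := by
      rw [← Finset.coe_univ]; exact hsum _
    have h2 : (κt (Set.univ)).toReal = 1 := by rw [measure_univ, ENNReal.toReal_one]
    rw [← h2, h1, ENNReal.toReal_sum (fun s _ => measure_ne_top _ _)]
  have hmass : ∑ sh, p' sh = 1 := by
    rw [← htotal]
    simp only [hp']
    exact Equiv.sum_comp ⟨σ, σ, hσinv, hσinv⟩ p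
  -- the event as a finset
  set FA : Finset (Fin m → Bool) :=
    Finset.univ.filter (fun s => v ≤ ∑ i, max 0 (t i * sgn (s i))) with hFA
  have hFAset : {s : Fin m → Bool | v ≤ ∑ i, max 0 (t i * sgn (s i))} = ↑FA := by
    ext s; simp [hFA]
  have hmem : ∀ s, s ∈ FA ↔ σ s ∈ E := by
    intro s
    rw [hFA, hE, Finset.mem_filter, Finset.mem_filter]
    have : ∀ i, max 0 (t i * sgn (s i)) = if σ s i then |t i| else 0 := by
      intro i
      have := hterm (σ s) i
      rwa [hσinv s] at this
    simp only [Finset.mem_univ, true_and]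
    rw [Finset.sum_congr rfl (fun i _ => this i)]
  have himg : E.image σ = FA := by
    ext s
    simp only [Finset.mem_image]
    constructor
    · rintro ⟨sh, hsh, rfl⟩
      rw [hmem, hσinv]; exact hsh
    · intro hs
      exact ⟨σ s, (hmem s).mp hs, hσinv s⟩
  have hreindex : ∑ s ∈ FA, p s = ∑ sh ∈ E, p' sh := by
    rw [← himg, Finset.sum_image]
    intro x _ y _ hxy
    have := congrArg σ hxy
    rwa [hσinv, hσinv] at this
  -- RHS rewriting
  have hR : (∑ sh : Fin m → Bool, bernVecPr q sh *
      (if v ≤ ∑ i, (if sh i then |t i| else 0) then 1 else 0)) = ∑ sh ∈ E, bernVecPr q sh := by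
    rw [hE, Finset.sum_filter]
    exact Finset.sum_congr rfl (fun sh _ => by by_cases h : v ≤ ∑ i, (if sh i then |t i| else 0) <;> simp [h])
  -- conclude
  have hle : (κt {s : Fin m → Bool | v ≤ ∑ i, max 0 (t i * sgn (s i))}).toReal
      ≤ ∑ sh : Fin m → Bool, bernVecPr q sh *
        (if v ≤ ∑ i, (if sh i then |t i| else 0) then 1 else 0) := by
    rw [hFAset, hsum FA, ENNReal.toReal_sum (fun s _ => measure_ne_top _ _), hR]
    calc ∑ s ∈ FA, p s = ∑ sh ∈ E, p' sh := hreindex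
      _ ≤ (∑ sh, p' sh) * ∑ sh ∈ E, bernVecPr q sh := hkey
      _ = ∑ sh ∈ E, bernVecPr q sh := by rw [hmass, one_mul]
  calc κt {s : Fin m → Bool | v ≤ ∑ i, max 0 (t i * sgn (s i))}
      = ENNReal.ofReal ((κt {s : Fin m → Bool | v ≤ ∑ i, max 0 (t i * sgn (s i))}).toReal) :=
        (ENNReal.ofReal_toReal (measure_ne_top _ _)).symm
    _ ≤ _ := ENNReal.ofReal_le_ofReal hle

/-- **Pure DP version of the main result.** Let `M : {-1,+1}^m → ℝ^m` be `(ε,0)`-DP, `S` uniform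
on `{-1,+1}^m` and `T = M(S)`. Then for every `v` and almost every `t` (w.r.t. the law of `T`),
`P[∑ᵢ max{0, Tᵢ·Sᵢ} ≥ v ∣ T = t] ≤ P[∑ᵢ Šᵢ·|tᵢ| ≥ v]` where the `Šᵢ` are independent
`Bernoulli(eᵉ/(eᵉ+1))`. -/
theorem pure_dp_audit (m : ℕ) (ε : ℝ) (hε : 0 ≤ ε)
    (M : (Fin m → Bool) → Measure (Fin m → ℝ))
    (hMprob : ∀ s, IsProbabilityMeasure (M s)) (hMmeas : Measurable M)
    (hDP : PureDP M ε)
    (ρ : Measure ((Fin m → ℝ) × (Fin m → Bool)))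
    (hρ : ρ = ((PMF.uniformOfFintype (Fin m → Bool)).toMeasure).bind
        (fun s => (M s).map (fun t => (t, s))))
    [IsFiniteMeasure ρ] (v : ℝ) :
    ∀ᵐ t ∂ρ.fst,
      (ρ.condKernel t) {s : Fin m → Bool | v ≤ ∑ i, max 0 (t i * sgn (s i))}
        ≤ ENNReal.ofReal (∑ sh : Fin m → Bool,
            bernVecPr (exp ε / (exp ε + 1)) sh *
              (if v ≤ ∑ i, (if sh i then |t i| else 0) then 1 else 0)) := by
  have hae := aux_ae m ε hε M hMprob hMmeas hDP ρ hρ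
  filter_upwards [hae] with t ht
  exact aux_pointwise m ε hε v (ρ.condKernel t) t ht
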